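/- Let B be a nonnegative real d×d matrix all of whose rows sum to the same value b ≥ 0. If B is monotone, then trace(B) ≥ b. -/

import Mathlib

open Matrix

/-- A (row-)monotone matrix: the tail sums of the rows increase with the
row index. -/
def IsMonotone {d : ℕ} (B : Matrix (Fin d) (Fin d) ℝ) : Prop :=
  ∀ i j : Fin d, i ≤ j → ∀ m : Fin d,
    ∑ k ∈ Finset.Ici m, B i k ≤ ∑ k ∈ Finset.Ici m, B j k

/-- a nonnegative monotone matrix with all row sums equal to
`b ≥ 0` has trace at least `b`. -/
theorem stmt_9 {d : ℕ} (hd : 1 ≤ d) (B : Matrix (Fin d) (Fin d) ℝ) (b : ℝ)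
    (hb : 0 ≤ b)
    (hBnonneg : ∀ i j, 0 ≤ B i j)
    (hrows : ∀ i, ∑ j, B i j = b)
    (hmono : IsMonotone B) :
    b ≤ Matrix.trace B := by
  obtain ⟨n, rfl⟩ : ∃ n, d = n + 1 := ⟨d - 1, (Nat.succ_pred_eq_of_pos hd).symm⟩
  have hIoi : ∀ i : Fin n, Finset.Ioi i.castSucc = Finset.Ici i.succ := by
    intro i
    ext x
    simp [Fin.castSucc_lt_iff_succ_le]
  have key : ∀ m : Fin (n + 1),
      ∑ k ∈ Finset.Ici m, B m k ≤ ∑ i ∈ Finset.Ici m, B i i := by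
    intro m
    induction m using Fin.reverseInduction with
    | last =>
      refine le_of_eq (Finset.sum_congr rfl fun x hx => ?_)
      have hx' : x = Fin.last n :=
        le_antisymm (Fin.le_last x) (Finset.mem_Ici.mp hx)
      rw [hx']
    | cast i ih =>
      simp only [Finset.Ici_eq_cons_Ioi, Finset.sum_cons, hIoi]
      have h1 : ∑ k ∈ Finset.Ici i.succ, B i.castSucc k
          ≤ ∑ k ∈ Finset.Ici i.succ, B i.succ k :=
        hmono i.castSucc i.succ (Fin.castSucc_lt_succ : i.castSucc < i.succ).le i.succ
      simp only [Finset.Ici_eq_cons_Ioi, Finset.sum_cons] at h1 ih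
      linarith
  have h0 := key 0
  have hIci0 : Finset.Ici (0 : Fin (n + 1)) = Finset.univ := by
    ext x; simp [Fin.zero_le]
  rw [hIci0] at h0
  calc b = ∑ j, B 0 j := (hrows 0).symm
    _ ≤ ∑ i, B i i := h0
    _ = Matrix.trace B := rfl
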